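/- The matrices built from the TBT data satisfy the identities 𝒜_1 M_{42} − M_{42} A_1^* = i·(K_{11} M_{21} + 𝟏_n K) and 𝒜_2 M_{41} − M_{41} A_2^* = i·(K_{12} M_{22} + 𝟏_m K). -/

import Mathlib

open Matrix

noncomputable section

/-- The scalar sequence `a_r`: `0` for `r < 0`, `i/2` for `r = 0`, `i` for `r > 0`. -/
def aC (r : ℤ) : ℂ := if r < 0 then 0 else if r = 0 then Complex.I / 2 else Complex.I

/-- `A_1`: block matrix `{𝒜_{1,p−q}}` with blocks `0`, `(i/2)I_m`, `i·I_m`. -/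
def A1 (m n : ℕ) : Matrix (Fin n × Fin m) (Fin n × Fin m) ℂ :=
  Matrix.of fun r c => if r.2 = c.2 then aC (((r.1 : ℕ) : ℤ) - ((c.1 : ℕ) : ℤ)) else 0

/-- `A_2 = diag{𝒜_{2,0}, …, 𝒜_{2,0}}`. -/
def A2 (m n : ℕ) : Matrix (Fin n × Fin m) (Fin n × Fin m) ℂ :=
  Matrix.of fun r c => if r.1 = c.1 then aC (((r.2 : ℕ) : ℤ) - ((c.2 : ℕ) : ℤ)) else 0

/-- `𝒜_1 = {a_{j−ℓ}}_{j,ℓ=1}^n`. -/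
def calA1 (n : ℕ) : Matrix (Fin n) (Fin n) ℂ :=
  Matrix.of fun p q => aC (((p : ℕ) : ℤ) - ((q : ℕ) : ℤ))

/-- `𝒜_2 = {a_{j−ℓ}}_{j,ℓ=1}^m`. -/
def calA2 (m : ℕ) : Matrix (Fin m) (Fin m) ℂ :=
  Matrix.of fun j l => aC (((j : ℕ) : ℤ) - ((l : ℕ) : ℤ))

/-- The Toeplitz-block Toeplitz matrix `T`, entry `t_{p−q}^{(j−ℓ)}`. -/
def TBT (m n : ℕ) (t : ℤ → ℤ → ℂ) : Matrix (Fin n × Fin m) (Fin n × Fin m) ℂ :=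
  Matrix.of fun r c =>
    t (((r.1 : ℕ) : ℤ) - ((c.1 : ℕ) : ℤ)) (((r.2 : ℕ) : ℤ) - ((c.2 : ℕ) : ℤ))

/-- `M_{11}`: block column, `p`-th block `(1/2)𝒯_0 + Σ_{s=1}^{p−1} 𝒯_s`. -/
def M11 (m n : ℕ) (t : ℤ → ℤ → ℂ) : Matrix (Fin n × Fin m) (Fin m) ℂ :=
  Matrix.of fun r l => (1 / 2 : ℂ) * t 0 (((r.2 : ℕ) : ℤ) - ((l : ℕ) : ℤ))
    + ∑ s ∈ Finset.range (r.1 : ℕ), t ((s : ℤ) + 1) (((r.2 : ℕ) : ℤ) - ((l : ℕ) : ℤ))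

/-- `M_{21} = [I_m I_m … I_m]`. -/
def M21 (m n : ℕ) : Matrix (Fin m) (Fin n × Fin m) ℂ :=
  Matrix.of fun j c => if j = c.2 then 1 else 0

/-- `M_{31} = M_{21}^*`. -/
def M31 (m n : ℕ) : Matrix (Fin n × Fin m) (Fin m) ℂ := (M21 m n)ᴴ

/-- `M_{41}`: block row, `q`-th block `(1/2)𝒯_0 + Σ_{s=1}^{q−1} 𝒯_{−s}`. -/
def M41 (m n : ℕ) (t : ℤ → ℤ → ℂ) : Matrix (Fin m) (Fin n × Fin m) ℂ :=
  Matrix.of fun j c => (1 / 2 : ℂ) * t 0 (((j : ℕ) : ℤ) - ((c.2 : ℕ) : ℤ))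
    + ∑ s ∈ Finset.range (c.1 : ℕ), t (-((s : ℤ) + 1)) (((j : ℕ) : ℤ) - ((c.2 : ℕ) : ℤ))

/-- `j`-th entry of the column `ℳ_{12}^{(r)}`. -/
def m12e (m : ℕ) (t : ℤ → ℤ → ℂ) (r : ℤ) (j : Fin m) : ℂ :=
  (1 / 2 : ℂ) * t r 0 + ∑ s ∈ Finset.range (j : ℕ), t r ((s : ℤ) + 1)

/-- `ℓ`-th entry of the row `ℳ_{42}^{(r)}`. -/
def m42e (m : ℕ) (t : ℤ → ℤ → ℂ) (r : ℤ) (l : Fin m) : ℂ :=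
  (1 / 2 : ℂ) * t r 0 + ∑ s ∈ Finset.range (l : ℕ), t r (-((s : ℤ) + 1))

/-- `M_{12} = {ℳ_{12}^{(p−q)}}`. -/
def M12 (m n : ℕ) (t : ℤ → ℤ → ℂ) : Matrix (Fin n × Fin m) (Fin n) ℂ :=
  Matrix.of fun r q => m12e m t (((r.1 : ℕ) : ℤ) - ((q : ℕ) : ℤ)) r.2

/-- `M_{22}`. -/
def M22 (m n : ℕ) : Matrix (Fin n) (Fin n × Fin m) ℂ :=
  Matrix.of fun p c => if p = c.1 then 1 else 0

/-- `M_{32} = M_{22}^*`. -/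
def M32 (m n : ℕ) : Matrix (Fin n × Fin m) (Fin n) ℂ := (M22 m n)ᴴ

/-- `M_{42} = {ℳ_{42}^{(p−q)}}`. -/
def M42 (m n : ℕ) (t : ℤ → ℤ → ℂ) : Matrix (Fin n) (Fin n × Fin m) ℂ :=
  Matrix.of fun p c => m42e m t (((p : ℕ) : ℤ) - ((c.1 : ℕ) : ℤ)) c.2

/-- `K`: the `1×mn` row, `q`-th block `(1/2)ℳ_{42}^{(0)} + Σ_{s=1}^{q−1} ℳ_{42}^{(−s)}`. -/
def Krow (m n : ℕ) (t : ℤ → ℤ → ℂ) : (Fin n × Fin m) → ℂ :=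
  fun c => (1 / 2 : ℂ) * m42e m t 0 c.2
    + ∑ s ∈ Finset.range (c.1 : ℕ), m42e m t (-((s : ℤ) + 1)) c.2

/-- `K_{11}`: `p`-th row `(1/2)ℳ_{42}^{(0)} + Σ_{s=1}^{p−1} ℳ_{42}^{(s)}`. -/
def K11 (m n : ℕ) (t : ℤ → ℤ → ℂ) : Matrix (Fin n) (Fin m) ℂ :=
  Matrix.of fun p l => (1 / 2 : ℂ) * m42e m t 0 l
    + ∑ s ∈ Finset.range (p : ℕ), m42e m t ((s : ℤ) + 1) l

/-- `K_{12}`: `q`-th column `(1/2)ℳ_{12}^{(0)} + Σ_{s=1}^{q−1} ℳ_{12}^{(−s)}`. -/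
def K12 (m n : ℕ) (t : ℤ → ℤ → ℂ) : Matrix (Fin m) (Fin n) ℂ :=
  Matrix.of fun j q => (1 / 2 : ℂ) * m12e m t 0 j
    + ∑ s ∈ Finset.range (q : ℕ), m12e m t (-((s : ℤ) + 1)) j

/-- `Π_1 = [M_{11} M_{31}]`. -/
def Pi1 (m n : ℕ) (t : ℤ → ℤ → ℂ) : Matrix (Fin n × Fin m) (Fin m ⊕ Fin m) ℂ :=
  fromCols (M11 m n t) (M31 m n)

/-- `Π_2 = [M_{12} M_{32}]`. -/
def Pi2 (m n : ℕ) (t : ℤ → ℤ → ℂ) : Matrix (Fin n × Fin m) (Fin n ⊕ Fin n) ℂ :=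
  fromCols (M12 m n t) (M32 m n)

/-- `Π̂_1 = col[M_{21}; M_{41}]`. -/
def PiHat1 (m n : ℕ) (t : ℤ → ℤ → ℂ) : Matrix (Fin m ⊕ Fin m) (Fin n × Fin m) ℂ :=
  fromRows (M21 m n) (M41 m n t)

/-- `Π̂_2 = col[M_{22}; M_{42}]`. -/
def PiHat2 (m n : ℕ) (t : ℤ → ℤ → ℂ) : Matrix (Fin n ⊕ Fin n) (Fin n × Fin m) ℂ :=
  fromRows (M22 m n) (M42 m n t)

/-- All-ones vector. -/
def onesV (k : Type*) : k → ℂ := fun _ => 1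

/-- `g_{12} = i·Π̂_1 T^{-1} Π_2 − i·[[𝟏_m 𝟏_n^*, 0],[K_{12}, 0]]`. -/
def g12M (m n : ℕ) (t : ℤ → ℤ → ℂ) : Matrix (Fin m ⊕ Fin m) (Fin n ⊕ Fin n) ℂ :=
  Complex.I • (PiHat1 m n t * (TBT m n t)⁻¹ * Pi2 m n t)
    - Complex.I • fromBlocks (vecMulVec (onesV (Fin m)) (onesV (Fin n))) 0 (K12 m n t) 0

/-- `g_{21} = i·Π̂_2 T^{-1} Π_1 − i·[[𝟏_n 𝟏_m^*, 0],[K_{11}, 0]]`. -/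
def g21M (m n : ℕ) (t : ℤ → ℤ → ℂ) : Matrix (Fin n ⊕ Fin n) (Fin m ⊕ Fin m) ℂ :=
  Complex.I • (PiHat2 m n t * (TBT m n t)⁻¹ * Pi1 m n t)
    - Complex.I • fromBlocks (vecMulVec (onesV (Fin n)) (onesV (Fin m))) 0 (K11 m n t) 0

/-- The `k×k` flip (anti-diagonal) matrix. -/
def flipU (k : ℕ) : Matrix (Fin k) (Fin k) ℂ :=
  Matrix.of fun p q => if (p : ℕ) + (q : ℕ) + 1 = k then 1 else 0

/-- `U_{2k}`, the `2k×2k` flip matrix on the sum type. -/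
def U2 (k : ℕ) : Matrix (Fin k ⊕ Fin k) (Fin k ⊕ Fin k) ℂ :=
  fromBlocks 0 (flipU k) (flipU k) 0

/-- `J_{2k} = diag{I_k, −I_k}`. -/
def J2 (k : ℕ) : Matrix (Fin k ⊕ Fin k) (Fin k ⊕ Fin k) ℂ :=
  fromBlocks 1 0 0 (-1)

/-- `U = U_{mn}`, the `mn×mn` flip matrix (global index `m·p + j`). -/
def UmnM (m n : ℕ) : Matrix (Fin n × Fin m) (Fin n × Fin m) ℂ :=
  Matrix.of fun r c =>
    if m * (r.1 : ℕ) + (r.2 : ℕ) + (m * (c.1 : ℕ) + (c.2 : ℕ)) + 1 = m * n then 1 else 0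

/-- `ψ(λ) = (λ + i/2)/(λ − i/2)`. -/
def psiM (l : ℂ) : ℂ := (l + Complex.I / 2) / (l - Complex.I / 2)

/-- `h(y_1, y_2)`, entry `y_1^{p−1} y_2^{j−1}`. -/
def hVec (m n : ℕ) (y1 y2 : ℂ) : (Fin n × Fin m) → ℂ :=
  fun r => y1 ^ (r.1 : ℕ) * y2 ^ (r.2 : ℕ)

/-- `ω(λ,μ) = 𝟏^*(A_1^*−μ_1)^{-1}(A_2^*−μ_2)^{-1}T^{-1}(A_2−λ_2)^{-1}(A_1−λ_1)^{-1}𝟏`. -/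
def omegaF (m n : ℕ) (t : ℤ → ℤ → ℂ) (l1 l2 u1 u2 : ℂ) : ℂ :=
  star (onesV (Fin n × Fin m)) ⬝ᵥ
    ((((A1 m n)ᴴ - u1 • 1)⁻¹ * ((A2 m n)ᴴ - u2 • 1)⁻¹ * (TBT m n t)⁻¹ *
      (A2 m n - l2 • 1)⁻¹ * (A1 m n - l1 • 1)⁻¹) *ᵥ onesV (Fin n × Fin m))

/-- `ρ(y,z) = h(conj z_1, conj z_2)^* T^{-1} h(y_1,y_2)`. -/
def rhoF (m n : ℕ) (t : ℤ → ℤ → ℂ) (y1 y2 z1 z2 : ℂ) : ℂ :=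
  star (hVec m n ((starRingEnd ℂ) z1) ((starRingEnd ℂ) z2)) ⬝ᵥ
    ((TBT m n t)⁻¹ *ᵥ hVec m n y1 y2)

/-- `Γ_1 = T^{-1}Π_1`. -/
def Gam1 (m n : ℕ) (t : ℤ → ℤ → ℂ) : Matrix (Fin n × Fin m) (Fin m ⊕ Fin m) ℂ :=
  (TBT m n t)⁻¹ * Pi1 m n t

/-- `Γ_2 = T^{-1}Π_2`. -/
def Gam2 (m n : ℕ) (t : ℤ → ℤ → ℂ) : Matrix (Fin n × Fin m) (Fin n ⊕ Fin n) ℂ :=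
  (TBT m n t)⁻¹ * Pi2 m n t

/-- `Γ̂_1 = Π̂_1 T^{-1}`. -/
def GamHat1 (m n : ℕ) (t : ℤ → ℤ → ℂ) : Matrix (Fin m ⊕ Fin m) (Fin n × Fin m) ℂ :=
  PiHat1 m n t * (TBT m n t)⁻¹

/-- `Γ̂_2 = Π̂_2 T^{-1}`. -/
def GamHat2 (m n : ℕ) (t : ℤ → ℤ → ℂ) : Matrix (Fin n ⊕ Fin n) (Fin n × Fin m) ℂ :=
  PiHat2 m n t * (TBT m n t)⁻¹

/-- `Γ = [Γ_1 Γ_2]`. -/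
def GammaFull (m n : ℕ) (t : ℤ → ℤ → ℂ) :
    Matrix (Fin n × Fin m) ((Fin m ⊕ Fin m) ⊕ (Fin n ⊕ Fin n)) ℂ :=
  fromCols (Gam1 m n t) (Gam2 m n t)

/-- `Γ̂ = col[Γ̂_1; Γ̂_2]`. -/
def GammaHatFull (m n : ℕ) (t : ℤ → ℤ → ℂ) :
    Matrix ((Fin m ⊕ Fin m) ⊕ (Fin n ⊕ Fin n)) (Fin n × Fin m) ℂ :=
  fromRows (GamHat1 m n t) (GamHat2 m n t)

/-- The row vector `u(μ)`. -/
def uRow (m n : ℕ) (t : ℤ → ℤ → ℂ) (u1 u2 : ℂ) :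
    ((Fin m ⊕ Fin m) ⊕ (Fin n ⊕ Fin n)) → ℂ :=
  star (onesV (Fin n × Fin m)) ᵥ*
      (((A1 m n)ᴴ - u1 • 1)⁻¹ * ((A2 m n)ᴴ - u2 • 1)⁻¹ * GammaFull m n t)
    - Complex.I • Sum.elim
        (Sum.elim (star (onesV (Fin m)) ᵥ* ((calA2 m)ᴴ - u2 • 1)⁻¹) (0 : Fin m → ℂ))
        (Sum.elim (star (onesV (Fin n)) ᵥ* ((calA1 n)ᴴ - u1 • 1)⁻¹) (0 : Fin n → ℂ))

/-- The column vector `û(λ)`. -/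
def uHatCol (m n : ℕ) (t : ℤ → ℤ → ℂ) (l1 l2 : ℂ) :
    ((Fin m ⊕ Fin m) ⊕ (Fin n ⊕ Fin n)) → ℂ :=
  (GammaHatFull m n t * (A2 m n - l2 • 1)⁻¹ * (A1 m n - l1 • 1)⁻¹) *ᵥ onesV (Fin n × Fin m)
    + Complex.I • Sum.elim
        (Sum.elim (0 : Fin m → ℂ) ((calA2 m - l2 • 1)⁻¹ *ᵥ onesV (Fin m)))
        (Sum.elim (0 : Fin n → ℂ) ((calA1 n - l1 • 1)⁻¹ *ᵥ onesV (Fin n)))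

/-- `P_1 = diag{I_{2m}, 0}`. -/
def P1M (m n : ℕ) :
    Matrix ((Fin m ⊕ Fin m) ⊕ (Fin n ⊕ Fin n)) ((Fin m ⊕ Fin m) ⊕ (Fin n ⊕ Fin n)) ℂ :=
  fromBlocks 1 0 0 0

/-- `P_2 = I − P_1`. -/
def P2M (m n : ℕ) :
    Matrix ((Fin m ⊕ Fin m) ⊕ (Fin n ⊕ Fin n)) ((Fin m ⊕ Fin m) ⊕ (Fin n ⊕ Fin n)) ℂ :=
  1 - P1M m n

/-- `G(λ)`, built from `g_{12}` and `g_{21}`. -/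
def GMat (m n : ℕ) (g12 : Matrix (Fin m ⊕ Fin m) (Fin n ⊕ Fin n) ℂ)
    (g21 : Matrix (Fin n ⊕ Fin n) (Fin m ⊕ Fin m) ℂ) (l1 l2 : ℂ) :
    Matrix ((Fin m ⊕ Fin m) ⊕ (Fin n ⊕ Fin n)) ((Fin m ⊕ Fin m) ⊕ (Fin n ⊕ Fin n)) ℂ :=
  fromBlocks (fromBlocks (calA2 m - l2 • 1) 0 0 (calA2 m - l2 • 1)) g12
             g21 (fromBlocks (calA1 n - l1 • 1) 0 0 (calA1 n - l1 • 1))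

/-- `G` as a matrix over the polynomial ring `ℂ[λ_1, λ_2]` (variables `X 0 = λ_1`, `X 1 = λ_2`). -/
def GPoly (m n : ℕ) (g12 : Matrix (Fin m ⊕ Fin m) (Fin n ⊕ Fin n) ℂ)
    (g21 : Matrix (Fin n ⊕ Fin n) (Fin m ⊕ Fin m) ℂ) :
    Matrix ((Fin m ⊕ Fin m) ⊕ (Fin n ⊕ Fin n)) ((Fin m ⊕ Fin m) ⊕ (Fin n ⊕ Fin n))
      (MvPolynomial (Fin 2) ℂ) :=
  fromBlocks
    (fromBlocks ((calA2 m).map MvPolynomial.C - (MvPolynomial.X 1 : MvPolynomial (Fin 2) ℂ) • 1) 0 0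
      ((calA2 m).map MvPolynomial.C - (MvPolynomial.X 1 : MvPolynomial (Fin 2) ℂ) • 1))
    (g12.map MvPolynomial.C)
    (g21.map MvPolynomial.C)
    (fromBlocks ((calA1 n).map MvPolynomial.C - (MvPolynomial.X 0 : MvPolynomial (Fin 2) ℂ) • 1) 0 0
      ((calA1 n).map MvPolynomial.C - (MvPolynomial.X 0 : MvPolynomial (Fin 2) ℂ) • 1))

/-- The vector `col[0_m; 𝟏_m; 0_n; 𝟏_n]`. -/
def eVec (m n : ℕ) : ((Fin m ⊕ Fin m) ⊕ (Fin n ⊕ Fin n)) → ℂ :=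
  Sum.elim (Sum.elim (0 : Fin m → ℂ) (onesV (Fin m))) (Sum.elim (0 : Fin n → ℂ) (onesV (Fin n)))

/-- `diag{J_{2m}U_{2m}, J_{2n}U_{2n}}`. -/
def DJU (m n : ℕ) :
    Matrix ((Fin m ⊕ Fin m) ⊕ (Fin n ⊕ Fin n)) ((Fin m ⊕ Fin m) ⊕ (Fin n ⊕ Fin n)) ℂ :=
  fromBlocks (J2 m * U2 m) 0 0 (J2 n * U2 n)

/-- The block column `col[I_m; I_m; …; I_m]`. -/
def EcolId (m n : ℕ) : Matrix (Fin n × Fin m) (Fin m) ℂ :=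
  Matrix.of fun r l => if r.2 = l then 1 else 0


lemma aC_conj (r : ℤ) : (starRingEnd ℂ) (aC r) = -aC r := by
  unfold aC; split_ifs <;> simp [map_div₀, map_ofNat, neg_div]

lemma sumA {N : ℕ} (p : Fin N) (g : ℕ → ℂ) :
    ∑ s ∈ Finset.range N, aC ((p:ℤ) - (s:ℤ)) * g s
      = Complex.I/2 * g p + ∑ s ∈ Finset.range (p:ℕ), Complex.I * g s := by
  have hsub : Finset.range ((p:ℕ)+1) ⊆ Finset.range N := Finset.range_subset_range.2 p.isLt
  rw [← Finset.sum_subset hsub (by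
    intro s hs hs'
    have h : (p:ℕ) < s := by
      by_contra h
      exact hs' (Finset.mem_range.2 (Nat.lt_succ_of_le (not_lt.1 h)))
    have h2 : ((p:ℤ) - s) < 0 := by omega
    simp [aC, h2])]
  rw [Finset.sum_range_succ]
  have h3 : ((p:ℤ) - (p:ℤ)) = 0 := by ring
  rw [h3]
  have h2 : ∀ s ∈ Finset.range (p:ℕ), aC ((p:ℤ) - s) * g s = Complex.I * g s := by
    intro s hs
    have hs' := Finset.mem_range.1 hs
    have h0 : ¬ ((p:ℤ) - s < 0) := by omega
    have h1 : ¬ ((p:ℤ) - s = 0) := by omega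
    simp [aC, h0, h1]
  rw [Finset.sum_congr rfl h2]
  simp [aC]; ring


lemma sumA' {N : ℕ} (p : Fin N) (g : ℕ → ℂ) :
    ∑ s ∈ Finset.range N, g s * aC ((p:ℤ) - (s:ℤ))
      = Complex.I/2 * g p + ∑ s ∈ Finset.range (p:ℕ), Complex.I * g s := by
  rw [Finset.sum_congr rfl (fun s _ => mul_comm (g s) (aC ((p:ℤ) - (s:ℤ))))]
  exact sumA p g

lemma shiftSum (f : ℤ → ℂ) (p : ℕ) (a : ℤ) :
    (∑ s ∈ Finset.range p, f ((s:ℤ) + a)) + f ((p:ℤ) + a)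
      = f a + ∑ s ∈ Finset.range p, f ((s:ℤ) + 1 + a) := by
  have h1 := Finset.sum_range_succ (fun s : ℕ => f ((s:ℤ) + a)) p
  have h2 := Finset.sum_range_succ' (fun s : ℕ => f ((s:ℤ) + a)) p
  simp only [Nat.cast_zero, zero_add, Nat.cast_add, Nat.cast_one] at h1 h2
  rw [← h1, h2, add_comm]

lemma keySum (f : ℤ → ℂ) (p q : ℕ) :
    f ((p:ℤ) - q) + (∑ s ∈ Finset.range p, f ((s:ℤ) - q)) + ∑ s ∈ Finset.range q, f ((p:ℤ) - s)
  = f 0 + (∑ s ∈ Finset.range p, f ((s:ℤ)+1)) + ∑ s ∈ Finset.range q, f (-((s:ℤ)+1)) := by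
  induction q with
  | zero =>
    have hs := shiftSum f p 0
    simp only [add_zero, Nat.cast_zero, sub_zero] at hs ⊢
    simp only [Finset.range_zero, Finset.sum_empty, add_zero]
    linear_combination hs
  | succ q ih =>
    have e2 : ∀ s:ℕ, (s:ℤ) - ((q:ℤ)+1) = (s:ℤ) + (-(q:ℤ)-1) := fun s => by ring
    have e4 : ∀ s:ℕ, (s:ℤ) - (q:ℤ) = (s:ℤ) + 1 + (-(q:ℤ)-1) := fun s => by ring
    have key : (∑ s ∈ Finset.range p, f ((s:ℤ) - ((q:ℤ) + 1))) + f ((p:ℤ) - ((q:ℤ)+1))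
        = f (-(q:ℤ) - 1) + ∑ s ∈ Finset.range p, f ((s:ℤ) - q) := by
      have hs := shiftSum f p (-(q:ℤ) - 1)
      simp only [e2, e4]
      convert hs using 3
    rw [Finset.sum_range_succ (fun s : ℕ => f ((p:ℤ) - s)) q,
        Finset.sum_range_succ (fun s : ℕ => f (-((s:ℤ)+1))) q]
    push_cast
    have e5 : -((q:ℤ)+1) = -(q:ℤ) - 1 := by ring
    rw [e5]
    calc f ((p:ℤ) - ((q:ℤ)+1)) + (∑ s ∈ Finset.range p, f ((s:ℤ) - ((q:ℤ)+1)))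
          + ((∑ s ∈ Finset.range q, f ((p:ℤ) - s)) + f ((p:ℤ) - q))
        = ((∑ s ∈ Finset.range p, f ((s:ℤ) - ((q:ℤ)+1))) + f ((p:ℤ) - ((q:ℤ)+1)))
          + (∑ s ∈ Finset.range q, f ((p:ℤ) - s)) + f ((p:ℤ) - q) := by ring
      _ = (f (-(q:ℤ) - 1) + ∑ s ∈ Finset.range p, f ((s:ℤ) - q))
          + (∑ s ∈ Finset.range q, f ((p:ℤ) - s)) + f ((p:ℤ) - q) := by rw [key]
      _ = f (-(q:ℤ) - 1) + (f ((p:ℤ) - q) + (∑ s ∈ Finset.range p, f ((s:ℤ) - q))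
          + ∑ s ∈ Finset.range q, f ((p:ℤ) - s)) := by ring
      _ = f (-(q:ℤ) - 1) + (f 0 + (∑ s ∈ Finset.range p, f ((s:ℤ)+1))
          + ∑ s ∈ Finset.range q, f (-((s:ℤ)+1))) := by rw [ih]
      _ = _ := by ring


lemma expand2 (m : ℕ) (t : ℤ → ℤ → ℂ) (c : ℕ) (j l : Fin m) :
    ((1/2:ℂ) * t 0 0 + ∑ s ∈ Finset.range c, t (-((s:ℤ)+1)) 0)
    + (∑ s' ∈ Finset.range (j:ℕ), ((1/2:ℂ) * t 0 ((s':ℤ)+1)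
        + ∑ s ∈ Finset.range c, t (-((s:ℤ)+1)) ((s':ℤ)+1)))
    + (∑ s' ∈ Finset.range (l:ℕ), ((1/2:ℂ) * t 0 (-((s':ℤ)+1))
        + ∑ s ∈ Finset.range c, t (-((s:ℤ)+1)) (-((s':ℤ)+1))))
  = ((1/2:ℂ) * m12e m t 0 j + ∑ s ∈ Finset.range c, m12e m t (-((s:ℤ)+1)) j)
    + ((1/2:ℂ) * m42e m t 0 l + ∑ s ∈ Finset.range c, m42e m t (-((s:ℤ)+1)) l) := by
  have c1 : ∑ s' ∈ Finset.range (j:ℕ), ∑ s ∈ Finset.range c, t (-((s:ℤ)+1)) ((s':ℤ)+1)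
      = ∑ s ∈ Finset.range c, ∑ s' ∈ Finset.range (j:ℕ), t (-((s:ℤ)+1)) ((s':ℤ)+1) :=
    Finset.sum_comm
  have c2 : ∑ s' ∈ Finset.range (l:ℕ), ∑ s ∈ Finset.range c, t (-((s:ℤ)+1)) (-((s':ℤ)+1))
      = ∑ s ∈ Finset.range c, ∑ s' ∈ Finset.range (l:ℕ), t (-((s:ℤ)+1)) (-((s':ℤ)+1)) :=
    Finset.sum_comm
  simp only [m12e, m42e, Finset.sum_add_distrib, mul_add]
  simp only [← Finset.mul_sum]
  linear_combination c1 + c2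

/-- `𝒜_1 M_{42} − M_{42} A_1^* = i(K_{11}M_{21} + 𝟏_n K)` and
`𝒜_2 M_{41} − M_{41} A_2^* = i(K_{12}M_{22} + 𝟏_m K)`. -/
theorem M4p_identities (m n : ℕ) (hm : 0 < m) (hn : 0 < n) (t : ℤ → ℤ → ℂ) :
    calA1 n * M42 m n t - M42 m n t * (A1 m n)ᴴ
        = Complex.I • (K11 m n t * M21 m n + vecMulVec (onesV (Fin n)) (Krow m n t)) ∧
    calA2 m * M41 m n t - M41 m n t * (A2 m n)ᴴ
        = Complex.I • (K12 m n t * M22 m n + vecMulVec (onesV (Fin m)) (Krow m n t)) := by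
  constructor
  · ext p c
    obtain ⟨q, l⟩ := c
    simp only [Matrix.sub_apply, Matrix.mul_apply, Matrix.smul_apply, Matrix.add_apply,
      calA1, M42, M21, K11, Krow, A1, conjTranspose_apply, vecMulVec_apply, onesV,
      Matrix.of_apply, Fintype.sum_prod_type, aC_conj, apply_ite (starRingEnd ℂ), map_zero,
      mul_ite, mul_zero, mul_neg, Finset.sum_ite_eq, Finset.mem_univ, if_true,
      ite_mul, one_mul, zero_mul, mul_one, smul_eq_mul, Complex.star_def,
      Finset.sum_ite_eq']
    simp only [Finset.sum_neg_distrib, sub_neg_eq_add]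
    rw [Fin.sum_univ_eq_sum_range (fun s : ℕ => aC (((p:ℕ):ℤ) - s) * m42e m t ((s:ℤ) - ((q:ℕ):ℤ)) l) n,
        Fin.sum_univ_eq_sum_range (fun s : ℕ => m42e m t (((p:ℕ):ℤ) - s) l * aC (((q:ℕ):ℤ) - s)) n,
        sumA p (fun s : ℕ => m42e m t ((s:ℤ) - ((q:ℕ):ℤ)) l),
        sumA' q (fun s : ℕ => m42e m t (((p:ℕ):ℤ) - s) l)]
    simp only [← Finset.mul_sum]
    linear_combination Complex.I * keySum (fun r => m42e m t r l) (p:ℕ) (q:ℕ)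
  · ext j c
    obtain ⟨q, l⟩ := c
    simp only [Matrix.sub_apply, Matrix.mul_apply, Matrix.smul_apply, Matrix.add_apply,
      calA2, M41, M22, K12, Krow, A2, conjTranspose_apply, vecMulVec_apply, onesV,
      Matrix.of_apply, Fintype.sum_prod_type, aC_conj, apply_ite (starRingEnd ℂ), map_zero,
      mul_ite, mul_zero, mul_neg, Finset.sum_ite_eq, Finset.mem_univ, if_true,
      ite_mul, one_mul, zero_mul, mul_one, smul_eq_mul, Complex.star_def,
      Finset.sum_ite_eq']
    rw [Finset.sum_comm]
    simp only [Finset.sum_ite_eq, Finset.mem_univ, if_true, Finset.sum_neg_distrib,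
      sub_neg_eq_add]
    rw [Fin.sum_univ_eq_sum_range (fun s : ℕ => aC (((j:ℕ):ℤ) - s)
          * (1/2 * t 0 ((s:ℤ) - ((l:ℕ):ℤ))
            + ∑ s' ∈ Finset.range (q:ℕ), t (-((s':ℤ)+1)) ((s:ℤ) - ((l:ℕ):ℤ)))) m,
        Fin.sum_univ_eq_sum_range (fun s : ℕ => (1/2 * t 0 (((j:ℕ):ℤ) - s)
            + ∑ s' ∈ Finset.range (q:ℕ), t (-((s':ℤ)+1)) (((j:ℕ):ℤ) - s))
          * aC (((l:ℕ):ℤ) - s)) m,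
        sumA j (fun s : ℕ => 1/2 * t 0 ((s:ℤ) - ((l:ℕ):ℤ))
          + ∑ s' ∈ Finset.range (q:ℕ), t (-((s':ℤ)+1)) ((s:ℤ) - ((l:ℕ):ℤ))),
        sumA' l (fun s : ℕ => 1/2 * t 0 (((j:ℕ):ℤ) - s)
          + ∑ s' ∈ Finset.range (q:ℕ), t (-((s':ℤ)+1)) (((j:ℕ):ℤ) - s))]
    simp only [← Finset.mul_sum]
    linear_combination Complex.I * keySum (fun x => 1/2 * t 0 x
        + ∑ s' ∈ Finset.range (q:ℕ), t (-((s':ℤ)+1)) x) (j:ℕ) (l:ℕ)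
      + Complex.I * expand2 m t (q:ℕ) j l

end
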